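/- If M ≤_{1+2·α} N in the standard asymmetric back-and-forth relations, then M ≡ᵇᶠ_α N in the standard symmetric back-and-forth relations. -/

import Mathlib

open FirstOrder

/-- Two tuples have the same quantifier-free type. -/
def QFEquiv (L : FirstOrder.Language) (M N : Type*) [L.Structure M] [L.Structure N]
    {n : ℕ} (a : Fin n → M) (b : Fin n → N) : Prop :=
  ∀ φ : L.Formula (Fin n), φ.IsQF → (φ.Realize a ↔ φ.Realize b)

/-- The standard symmetric back-and-forth relation of rank `α`. -/
def BF (L : FirstOrder.Language) (M N : Type*) [L.Structure M] [L.Structure N]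
    (α : Ordinal) (n : ℕ) (a : Fin n → M) (b : Fin n → N) : Prop :=
  (α = 0 ∧ QFEquiv L M N a b) ∨
  (α ≠ 0 ∧
    (∀ β < α, ∀ (m : ℕ) (c : Fin m → M), ∃ d : Fin m → N,
      BF L M N β (n + m) (Fin.append a c) (Fin.append b d)) ∧
    (∀ β < α, ∀ (m : ℕ) (d : Fin m → N), ∃ c : Fin m → M,
      BF L M N β (n + m) (Fin.append a c) (Fin.append b d)))
termination_by α

/-- The existential type of `b` in `N` is contained in the existential type of `a` in `M`:
every existential formula (existential quantifiers applied to a quantifier-free formula)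
true of `b` in `N` is true of `a` in `M`. -/
def ExTypeLe (L : FirstOrder.Language) (M N : Type*) [L.Structure M] [L.Structure N]
    {n : ℕ} (a : Fin n → M) (b : Fin n → N) : Prop :=
  ∀ (m : ℕ) (φ : L.BoundedFormula (Fin n) m), φ.IsQF →
    (φ.exs.Realize b → φ.exs.Realize a)

/-- The standard asymmetric back-and-forth relation `(M,a) ≤_α (N,b)` (for `α ≥ 1`). -/
def ALE (L : FirstOrder.Language) (M N : Type u) [L.Structure M] [L.Structure N]
    (α : Ordinal) (n : ℕ) (a : Fin n → M) (b : Fin n → N) : Prop :=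
  (α ≤ 1 ∧ ExTypeLe L M N a b) ∨
  (1 < α ∧
    ∀ β, 1 ≤ β → β < α → ∀ (m : ℕ) (d : Fin m → N), ∃ c : Fin m → M,
      ALE L N M β (n + m) (Fin.append b d) (Fin.append a c))
termination_by α

lemma exTypeLe_qfEquiv {L : FirstOrder.Language} {M N : Type u} [L.Structure M] [L.Structure N]
    {n : ℕ} {a : Fin n → M} {b : Fin n → N} (h : ExTypeLe L M N a b) : QFEquiv L M N a b := by
  intro φ hφ
  have h1 : φ.Realize b → φ.Realize a := h 0 φ hφ
  have h2 : φ.not.Realize b → φ.not.Realize a := h 0 φ.not hφ.not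
  constructor
  · intro ha
    by_contra hb
    exact FirstOrder.Language.Formula.realize_not.mp
      (h2 (FirstOrder.Language.Formula.realize_not.mpr hb)) ha
  · exact h1

lemma bf_symm {L : FirstOrder.Language} : ∀ (α : Ordinal), ∀ {M N : Type u}
    [L.Structure M] [L.Structure N] {n : ℕ} {a : Fin n → M} {b : Fin n → N},
    BF L M N α n a b → BF L N M α n b a := by
  intro α
  induction α using Ordinal.induction with
  | _ α IH =>
    intro M N _ _ n a b h
    rw [BF] at h ⊢
    rcases h with ⟨h0, hqf⟩ | ⟨hne, hforth, hback⟩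
    · exact Or.inl ⟨h0, fun φ hφ => (hqf φ hφ).symm⟩
    · refine Or.inr ⟨hne, ?_, ?_⟩
      · intro β hβ m d
        obtain ⟨c, hc⟩ := hback β hβ m d
        exact ⟨c, IH β hβ hc⟩
      · intro β hβ m c
        obtain ⟨d, hd⟩ := hforth β hβ m c
        exact ⟨d, IH β hβ hd⟩

lemma append_append_nil {γ : Type u} {n m : ℕ} (a : Fin n → γ) (c0 : Fin 0 → γ)
    (c : Fin m → γ) : Fin.append (Fin.append a c0) c = Fin.append a c := by
  have h : Fin.append a c0 = a := by
    rw [Subsingleton.elim c0 Fin.elim0, Fin.append_elim0]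
    ext i
    simp
  rw [h]

lemma ale_to_bf {L : FirstOrder.Language} : ∀ (α : Ordinal), ∀ (M N : Type u)
    [L.Structure M] [L.Structure N] (n : ℕ) (a : Fin n → M) (b : Fin n → N),
    ALE L M N (1 + 2 * α) n a b → BF L M N α n a b := by
  intro α
  induction α using Ordinal.induction with
  | _ α IH =>
    intro M N _ _ n a b h
    rcases eq_or_ne α 0 with rfl | hα
    · rw [mul_zero, add_zero] at h
      rw [BF]
      refine Or.inl ⟨rfl, ?_⟩
      rw [ALE] at h
      rcases h with ⟨-, hex⟩ | ⟨hlt, -⟩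
      · exact exTypeLe_qfEquiv hex
      · exact absurd hlt (lt_irrefl 1)
    · have hαpos : 0 < α := pos_iff_ne_zero.mpr hα
      have h1 : (1 : Ordinal) < 1 + 2 * α := by
        calc (1:Ordinal) = 1 + 0 := (add_zero 1).symm
        _ < 1 + 2 * α := add_lt_add_right (mul_pos two_pos hαpos) 1
      rw [ALE] at h
      rcases h with ⟨hle, -⟩ | ⟨-, hstep⟩
      · exact absurd (lt_of_lt_of_le h1 hle) (lt_irrefl 1)
      rw [BF]
      refine Or.inr ⟨hα, ?_, ?_⟩
      · -- forth
        intro β hβ m c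
        have hb1 : (1 : Ordinal) ≤ 1 + 2 * β + 1 := le_add_self
        have hb2 : 1 + 2 * β + 1 < 1 + 2 * α := by
          have h2 : 2 * β + 2 ≤ 2 * α := by
            have h3 : β + 1 ≤ α := Order.add_one_le_of_lt hβ
            calc 2 * β + 2 = 2 * (β + 1) := by rw [mul_add, mul_one]
            _ ≤ 2 * α := mul_le_mul_right h3 2
          calc 1 + 2 * β + 1 < 1 + 2 * β + 1 + 1 := lt_add_one _
          _ = 1 + (2 * β + 2) := by rw [add_assoc (1 + 2 * β), one_add_one_eq_two, add_assoc]
          _ ≤ 1 + 2 * α := add_le_add_right h2 1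
        obtain ⟨c0, hc0⟩ := hstep (1 + 2 * β + 1) hb1 hb2 0 (fun i => i.elim0)
        rw [ALE] at hc0
        rcases hc0 with ⟨hle, -⟩ | ⟨-, hstep2⟩
        · exact absurd (lt_of_le_of_lt hle
            (lt_of_le_of_lt (le_self_add) (lt_add_one (1 + 2 * β)))) (lt_irrefl _)
        · obtain ⟨d, hd⟩ := hstep2 (1 + 2 * β) (le_self_add)
            (lt_add_one _) m c
          rw [append_append_nil, append_append_nil] at hd
          exact ⟨d, IH β hβ M N (n + m) _ _ hd⟩
      · -- back
        intro β hβ m d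
        have hb1 : (1 : Ordinal) ≤ 1 + 2 * β := le_self_add
        have hb2 : 1 + 2 * β < 1 + 2 * α :=
          add_lt_add_right (mul_lt_mul_of_pos_left hβ two_pos) 1
        obtain ⟨c, hc⟩ := hstep (1 + 2 * β) hb1 hb2 m d
        exact ⟨c, bf_symm β (IH β hβ N M (n + m) _ _ hc)⟩

/-- If `M ≤_{1+2·α} N` in the asymmetric back-and-forth relations, then `M ≡ᵇᶠ_α N`
in the symmetric back-and-forth relations. -/
theorem ale_implies_bf {L : FirstOrder.Language} {M N : Type u}
    [L.Structure M] [L.Structure N] {α : Ordinal}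
    (h : ALE L M N (1 + 2 * α) 0 (fun i => i.elim0) (fun i => i.elim0)) :
    BF L M N α 0 (fun i => i.elim0) (fun i => i.elim0) := by
  exact ale_to_bf α M N 0 _ _ h
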